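/- Let (X,d) be a finite ultrametric space. Then |Sp(X)| ≤ |X|, where Sp(X) = {d(x,y) : x,y ∈ X} is the spectrum of X (the Gomory–Hu inequality). -/

import Mathlib

/-- An ultrametric on a type `X`. -/
def IsUltrametricOn {X : Type*} (d : X → X → ℝ) : Prop :=
  (∀ x y, 0 ≤ d x y) ∧ (∀ x y, d x y = d y x) ∧ (∀ x y, d x y = 0 ↔ x = y) ∧
    ∀ x y z, d x y ≤ max (d x z) (d z y)

/-- The spectrum of an ultrametric space: the set of distances between its points. -/
def spectrum' {X : Type*} (d : X → X → ℝ) : Set ℝ := {r | ∃ x y, d x y = r}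

private lemma spt_finite {X : Type*} (d : X → X → ℝ) (t : Finset X) :
    ({r | ∃ x ∈ t, ∃ y ∈ t, d x y = r} : Set ℝ).Finite := by
  apply (((t ×ˢ t : Finset (X × X)).finite_toSet.image (fun p => d p.1 p.2))).subset
  rintro r ⟨x, hx, y, hy, rfl⟩
  exact ⟨(x, y), by simp [Finset.mem_coe, Finset.mem_product, hx, hy], rfl⟩

private lemma gomory_hu_aux {X : Type*} [DecidableEq X] (d : X → X → ℝ)
    (hd : IsUltrametricOn d) (s : Finset X) :
    ({r | ∃ x ∈ s, ∃ y ∈ s, d x y = r} : Set ℝ).ncard ≤ s.card := by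
  obtain ⟨hnn, hsymm, hzero, hultra⟩ := hd
  induction s using Finset.strongInduction with
  | _ s ih =>
    rcases s.eq_empty_or_nonempty with rfl | ⟨c, hc⟩
    · have he : ({r | ∃ x ∈ (∅:Finset X), ∃ y ∈ (∅:Finset X), d x y = r} : Set ℝ) = ∅ := by
        ext r; simp
      simp [he]
    · -- get maximal pair
      obtain ⟨⟨a, b⟩, habm, hmax⟩ :=
        (s ×ˢ s).exists_max_image (fun p => d p.1 p.2) ⟨(c, c), Finset.mem_product.2 ⟨hc, hc⟩⟩
      rw [Finset.mem_product] at habm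
      obtain ⟨ha, hb⟩ := habm
      have hmax' : ∀ x ∈ s, ∀ y ∈ s, d x y ≤ d a b := fun x hx y hy =>
        hmax (x, y) (Finset.mem_product.2 ⟨hx, hy⟩)
      by_cases hD : d a b = 0
      · -- all distances 0
        have hsub : ({r | ∃ x ∈ s, ∃ y ∈ s, d x y = r} : Set ℝ) ⊆ {0} := by
          rintro r ⟨x, hx, y, hy, rfl⟩
          have := hmax' x hx y hy
          have := hnn x y
          simp only [Set.mem_singleton_iff]
          linarith
        calc ({r | ∃ x ∈ s, ∃ y ∈ s, d x y = r} : Set ℝ).ncard ≤ ({0} : Set ℝ).ncard :=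
              Set.ncard_le_ncard hsub (Set.finite_singleton 0)
          _ = 1 := Set.ncard_singleton 0
          _ ≤ s.card := Finset.card_pos.2 ⟨c, hc⟩
      · set D := d a b with hDdef
        have hDpos : 0 < D := lt_of_le_of_ne (hnn a b) (Ne.symm hD)
        set s₁ := s.filter (fun x => d x a < D) with hs1
        set s₂ := s.filter (fun x => ¬ d x a < D) with hs2
        have ha1 : a ∈ s₁ := by
          simp [hs1, Finset.mem_filter, ha]
          rw [(hzero a a).2 rfl]; exact hDpos
        have hb2 : b ∈ s₂ := by
          simp [hs2, Finset.mem_filter, hb]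
          rw [hsymm b a]
        have hb1 : b ∉ s₁ := by
          simp [hs1, Finset.mem_filter]
          intro _
          rw [hsymm b a]
        have ha2 : a ∉ s₂ := by
          simp [hs2, Finset.mem_filter]
          intro _
          rw [(hzero a a).2 rfl]; exact hDpos
        have hss1 : s₁ ⊂ s := ⟨Finset.filter_subset _ _, fun h => hb1 (h hb)⟩
        have hss2 : s₂ ⊂ s := ⟨Finset.filter_subset _ _, fun h => ha2 (h ha)⟩
        -- cross distances equal D
        have hcross : ∀ x ∈ s₁, ∀ y ∈ s₂, d x y = D := by
          intro x hx y hy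
          rw [hs1, Finset.mem_filter] at hx
          rw [hs2, Finset.mem_filter] at hy
          have hyaD : D ≤ d y a := not_lt.1 hy.2
          have h1 : d y a ≤ max (d y x) (d x a) := hultra y a x
          have h2 : D ≤ max (d y x) (d x a) := le_trans hyaD h1
          have h3 : D ≤ d y x := by
            rcases max_cases (d y x) (d x a) with ⟨he, _⟩ | ⟨he, _⟩
            · rwa [he] at h2
            · rw [he] at h2; exact absurd hx.2 (not_lt.2 h2)
          have h4 : d x y ≤ D := hmax' x hx.1 y hy.1
          rw [hsymm x y]
          exact le_antisymm (by rw [← hsymm x y]; exact h4) h3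
        -- inclusion
        have hincl : ({r | ∃ x ∈ s, ∃ y ∈ s, d x y = r} : Set ℝ) ⊆
            ({r | ∃ x ∈ s₁, ∃ y ∈ s₁, d x y = r} \ {0}) ∪
            ({r | ∃ x ∈ s₂, ∃ y ∈ s₂, d x y = r} ∪ {D}) := by
          rintro r ⟨x, hx, y, hy, rfl⟩
          by_cases hr0 : d x y = 0
          · right; left
            exact ⟨b, hb2, b, hb2, by rw [(hzero b b).2 rfl, hr0]⟩
          · by_cases hx1 : d x a < D
            · by_cases hy1 : d y a < D
              · left
                refine ⟨⟨x, Finset.mem_filter.2 ⟨hx, hx1⟩, y, Finset.mem_filter.2 ⟨hy, hy1⟩, rfl⟩, hr0⟩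
              · right; right
                have := hcross x (Finset.mem_filter.2 ⟨hx, hx1⟩) y (Finset.mem_filter.2 ⟨hy, hy1⟩)
                simp [this]
            · by_cases hy1 : d y a < D
              · right; right
                have := hcross y (Finset.mem_filter.2 ⟨hy, hy1⟩) x (Finset.mem_filter.2 ⟨hx, hx1⟩)
                simp [hsymm x y, this]
              · right; left
                exact ⟨x, Finset.mem_filter.2 ⟨hx, hx1⟩, y, Finset.mem_filter.2 ⟨hy, hy1⟩, rfl⟩
        -- counting
        have h01 : (0 : ℝ) ∈ ({r | ∃ x ∈ s₁, ∃ y ∈ s₁, d x y = r} : Set ℝ) :=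
          ⟨a, ha1, a, ha1, (hzero a a).2 rfl⟩
        have hf1 := spt_finite d s₁
        have hf2 := spt_finite d s₂
        have hc1 : ({r | ∃ x ∈ s₁, ∃ y ∈ s₁, d x y = r} \ {0} : Set ℝ).ncard =
            ({r | ∃ x ∈ s₁, ∃ y ∈ s₁, d x y = r} : Set ℝ).ncard - 1 :=
          Set.ncard_diff_singleton_of_mem h01
        have hpos1 : 1 ≤ ({r | ∃ x ∈ s₁, ∃ y ∈ s₁, d x y = r} : Set ℝ).ncard :=
          (Set.ncard_pos hf1).2 ⟨0, h01⟩
        have ih1 := ih s₁ hss1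
        have ih2 := ih s₂ hss2
        have hcards := Finset.card_filter_add_card_filter_not
          (s := s) (p := fun x => d x a < D)
        calc ({r | ∃ x ∈ s, ∃ y ∈ s, d x y = r} : Set ℝ).ncard
            ≤ (({r | ∃ x ∈ s₁, ∃ y ∈ s₁, d x y = r} \ {0}) ∪
              ({r | ∃ x ∈ s₂, ∃ y ∈ s₂, d x y = r} ∪ {D}) : Set ℝ).ncard := by
              exact Set.ncard_le_ncard hincl
                ((hf1.diff).union (hf2.union (Set.finite_singleton D)))
          _ ≤ ({r | ∃ x ∈ s₁, ∃ y ∈ s₁, d x y = r} \ {0} : Set ℝ).ncard +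
              ({r | ∃ x ∈ s₂, ∃ y ∈ s₂, d x y = r} ∪ {D} : Set ℝ).ncard :=
              Set.ncard_union_le _ _
          _ ≤ ({r | ∃ x ∈ s₁, ∃ y ∈ s₁, d x y = r} \ {0} : Set ℝ).ncard +
              (({r | ∃ x ∈ s₂, ∃ y ∈ s₂, d x y = r} : Set ℝ).ncard + 1) := by
              have h := Set.ncard_union_le ({r | ∃ x ∈ s₂, ∃ y ∈ s₂, d x y = r} : Set ℝ) {D}
              rw [Set.ncard_singleton] at h
              omega
          _ ≤ s₁.card + s₂.card := by omega
          _ = s.card := by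
              rw [hs1, hs2] at *
              convert hcards using 2

/-- The Gomory–Hu inequality: a finite ultrametric space has at most `|X|` distinct
distances. -/
theorem gomory_hu_inequality {X : Type*} [Fintype X] (d : X → X → ℝ)
    (hd : IsUltrametricOn d) :
    (spectrum' d).ncard ≤ Fintype.card X := by
  classical
  have := gomory_hu_aux d hd Finset.univ
  have heq : spectrum' d = {r | ∃ x ∈ (Finset.univ : Finset X), ∃ y ∈ Finset.univ, d x y = r} := by
    ext r; simp [spectrum']
  rw [heq, ← Finset.card_univ]
  exact this
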